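/- For the ring of N vertices with identical local 3×3 scattering matrix S(k), equal edge lengths d, and flux per edge θ, the eigenvalues of the total scattering matrix are λ_a(k,θ) = λ(k, θ + 2(a-1)π/N), a = 1,...,N, where λ(k,θ) = [e^{2ikd} det S + e^{ikd}((S_{11}S_{23}-S_{13}S_{21})e^{iθ} + (S_{11}S_{32}-S_{31}S_{12})e^{-iθ}) - S_{11}] / [e^{2ikd}(S_{22}S_{33}-S_{23}S_{32}) + e^{ikd}(S_{23}e^{iθ} + S_{32}e^{-iθ}) - 1]. -/

import Mathlib

open Matrix Complex Finset
set_option linter.unusedSectionVars false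
set_option maxHeartbeats 2000000
open Matrix Complex Finset
open Fin.CommRing
set_option linter.unusedSectionVars false
namespace Stmt3Aux

noncomputable def ww (N : ℕ) : ℂ := Complex.exp (2 * Real.pi * Complex.I / N)
noncomputable def ee (N : ℕ) (x : Fin N) : ℂ := ww N ^ (x : ℕ)

variable (N : ℕ) [NeZero N] (S : Matrix (Fin 3) (Fin 3) ℂ) (d θ k : ℝ)

lemma ww_prim : IsPrimitiveRoot (ww N) N := Complex.isPrimitiveRoot_exp N (NeZero.ne N)
lemma ww_ne : ww N ≠ 0 := Complex.exp_ne_zero _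

lemma ww_pow_eq {s t : ℕ} (h : s ≡ t [MOD N]) : ww N ^ s = ww N ^ t := by
  have ho : orderOf (ww N) = N := ((ww_prim N).eq_orderOf).symm
  calc ww N ^ s = ww N ^ (s % orderOf (ww N)) := (pow_mod_orderOf _ _).symm
    _ = ww N ^ (t % orderOf (ww N)) := by rw [ho]; exact congrArg _ h
    _ = ww N ^ t := pow_mod_orderOf _ _

lemma ee_zero : ee N 0 = 1 := by simp [ee]

lemma ee_add (x y : Fin N) : ee N (x + y) = ee N x * ee N y := by
  unfold ee
  rw [← pow_add]
  apply ww_pow_eq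
  rw [Fin.val_add]
  exact Nat.mod_modEq _ _

lemma ee_ne (x : Fin N) : ee N x ≠ 0 := pow_ne_zero _ (ww_ne N)

lemma ee_neg (x : Fin N) : ee N (-x) = (ee N x)⁻¹ := by
  have h : ee N x * ee N (-x) = 1 := by rw [← ee_add]; simp [ee_zero]
  exact eq_inv_of_mul_eq_one_right h

lemma ee_sub (x y : Fin N) : ee N (x - y) = ee N x * (ee N y)⁻¹ := by
  rw [sub_eq_add_neg, ee_add, ee_neg]

lemma ee_mul_val (x y : Fin N) : ee N (x * y) = ww N ^ ((x:ℕ) * (y:ℕ)) := by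
  unfold ee
  apply ww_pow_eq
  rw [Fin.val_mul]
  exact Nat.mod_modEq _ _

lemma sum_ee (x : Fin N) : ∑ c : Fin N, ee N (c * x) = if x = 0 then (N:ℂ) else 0 := by
  have h1 : ∀ c : Fin N, ee N (c * x) = (ww N ^ (x:ℕ)) ^ (c:ℕ) := by
    intro c
    rw [ee_mul_val, ← pow_mul, mul_comm]
  rw [Finset.sum_congr rfl (fun c _ => h1 c), Fin.sum_univ_eq_sum_range (fun i => (ww N ^ (x:ℕ)) ^ i) N]
  by_cases hx : x = 0
  · simp [hx]
  · rw [if_neg hx]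
    have hxv : 0 < (x:ℕ) := Nat.pos_of_ne_zero (fun h => hx (Fin.ext (by rw [h]; simp)))
    have hne1 : ww N ^ (x:ℕ) ≠ 1 := (ww_prim N).pow_ne_one_of_pos_of_lt hxv.ne' x.isLt
    rw [geom_sum_eq hne1]
    rw [← pow_mul, mul_comm, pow_mul, (ww_prim N).pow_eq_one, one_pow]
    simp

noncomputable def zz (a : Fin N) : ℂ := Complex.exp (θ * Complex.I) * ee N a

noncomputable def epsl : ℂ := Complex.exp (-((k:ℂ)*d) * Complex.I)

noncomputable def ddet (a : Fin N) : ℂ :=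
  S 1 1 * S 2 2 - (epsl d k * (zz N θ a)⁻¹ - S 1 2) * (epsl d k * zz N θ a - S 2 1)

noncomputable def adjA (a : Fin N) (i j : Fin 2) : ℂ :=
  if i = 0 then (if j = 0 then -S 2 2 else S 1 2 - epsl d k * (zz N θ a)⁻¹)
  else (if j = 0 then S 2 1 - epsl d k * zz N θ a else -S 1 1)

noncomputable def yent (a : Fin N) (i j : Fin 2) : ℂ :=
  adjA N S d θ k a i j / ((N:ℂ) * ddet N S d θ k a)

noncomputable def Ymat : Matrix (Fin N × Fin 2) (Fin N × Fin 2) ℂ :=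
  Matrix.of fun p q => ∑ a : Fin N, ee N (a * (q.1 - p.1)) * yent N S d θ k a p.2 q.2

lemma zz_ne (a : Fin N) : zz N θ a ≠ 0 :=
  mul_ne_zero (Complex.exp_ne_zero _) (pow_ne_zero _ (Complex.exp_ne_zero _))

lemma zz_eq (a : Fin N) :
    Complex.exp ((((θ + 2*(a:ℕ)*Real.pi/N : ℝ)):ℂ) * Complex.I) = zz N θ a := by
  have h1 : (((θ + 2*(a:ℕ)*Real.pi/N : ℝ)):ℂ) * Complex.I
      = (θ:ℂ) * Complex.I + (a:ℕ) * (2 * Real.pi * Complex.I / N) := by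
    push_cast
    ring
  rw [h1, Complex.exp_add, zz, ee, ww, ← Complex.exp_nat_mul]

lemma epsl_eq : epsl d k = (Complex.exp ((k:ℂ)*d*Complex.I))⁻¹ := by
  rw [epsl, ← Complex.exp_neg]
  ring_nf

lemma exp2_eq : Complex.exp (2*(k:ℂ)*d*Complex.I) = (Complex.exp ((k:ℂ)*d*Complex.I))^2 := by
  rw [sq, ← Complex.exp_add]
  ring_nf

lemma ddet_eq (a : Fin N) :
    Complex.exp (2*(k:ℂ)*d*Complex.I) * ddet N S d θ k a =
      (Complex.exp (2*(k:ℂ)*d*Complex.I) * (S 1 1 * S 2 2 - S 1 2 * S 2 1)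
        + Complex.exp ((k:ℂ)*d*Complex.I) *
            (S 1 2 * zz N θ a + S 2 1 * (zz N θ a)⁻¹)
        - 1) := by
  have ht : Complex.exp ((k:ℂ)*d*Complex.I) ≠ 0 := Complex.exp_ne_zero _
  have hz := zz_ne N θ a
  rw [ddet, epsl_eq, exp2_eq]
  field_simp
  ring

lemma ddet_ne (a : Fin N)
    (hne : (Complex.exp (2*(k:ℂ)*d*Complex.I) * (S 1 1 * S 2 2 - S 1 2 * S 2 1)
        + Complex.exp ((k:ℂ)*d*Complex.I) *
            (S 1 2 * zz N θ a + S 2 1 * (zz N θ a)⁻¹)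
        - 1) ≠ 0) : ddet N S d θ k a ≠ 0 := by
  intro h
  apply hne
  rw [← ddet_eq, h, mul_zero]


variable (N : ℕ) [NeZero N] (S : Matrix (Fin 3) (Fin 3) ℂ) (d θ k : ℝ)

lemma main0 (x : Fin N) (l : Fin 2) :
    Complex.exp (-(↑k * ↑d) * Complex.I - ↑θ * Complex.I) * (ee N x)⁻¹ * adjA N S d θ k x 1 l
      - (S 1 1 * adjA N S d θ k x 0 l + S 1 2 * adjA N S d θ k x 1 l)
    = (if (0:Fin 2) = l then (1:ℂ) else 0) * ddet N S d θ k x := by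
  have hw : Complex.exp ((θ:ℂ) * Complex.I) ≠ 0 := Complex.exp_ne_zero _
  have he := ee_ne N x
  have hem : Complex.exp (-(↑k * ↑d) * Complex.I - ↑θ * Complex.I)
      = epsl d k * (Complex.exp ((θ:ℂ) * Complex.I))⁻¹ := by
    rw [Complex.exp_sub, epsl, div_eq_mul_inv]
  fin_cases l <;>
    simp only [adjA, ddet, zz, hem, Fin.isValue, Fin.zero_eta, Fin.mk_one,
      show ((1:Fin 2) = 0) = False by simp, show ((0:Fin 2) = 0) = True by simp,
      show ((0:Fin 2) = 1) = False by simp, show ((1:Fin 2) = 1) = True by simp,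
      if_true, if_false] <;>
    · field_simp
      ring

lemma main1 (x : Fin N) (l : Fin 2) :
    Complex.exp (-(↑k * ↑d) * Complex.I + ↑θ * Complex.I) * ee N x * adjA N S d θ k x 0 l
      - (S 2 1 * adjA N S d θ k x 0 l + S 2 2 * adjA N S d θ k x 1 l)
    = (if (1:Fin 2) = l then (1:ℂ) else 0) * ddet N S d θ k x := by
  have hw : Complex.exp ((θ:ℂ) * Complex.I) ≠ 0 := Complex.exp_ne_zero _
  have he := ee_ne N x
  have hep : Complex.exp (-(↑k * ↑d) * Complex.I + ↑θ * Complex.I)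
      = epsl d k * Complex.exp ((θ:ℂ) * Complex.I) := by
    rw [Complex.exp_add, epsl]
  fin_cases l <;>
    simp only [adjA, ddet, zz, hep, Fin.isValue, Fin.zero_eta, Fin.mk_one,
      show ((1:Fin 2) = 0) = False by simp, show ((0:Fin 2) = 0) = True by simp,
      show ((0:Fin 2) = 1) = False by simp, show ((1:Fin 2) = 1) = True by simp,
      if_true, if_false] <;>
    · field_simp
      ring

lemma yent0 (hdet : ∀ a : Fin N, ddet N S d θ k a ≠ 0) (x : Fin N) (l : Fin 2) :
    Complex.exp (-(↑k * ↑d) * Complex.I - ↑θ * Complex.I) * (ee N x)⁻¹ * yent N S d θ k x 1 l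
      - (S 1 1 * yent N S d θ k x 0 l + S 1 2 * yent N S d θ k x 1 l)
    = (if (0:Fin 2) = l then ((N:ℂ))⁻¹ else 0) := by
  have hN : (N:ℂ) ≠ 0 := Nat.cast_ne_zero.mpr (NeZero.ne N)
  have hdd := hdet x
  unfold yent
  rw [← mul_div_assoc, ← mul_div_assoc, ← mul_div_assoc, ← add_div, ← sub_div, main0]
  by_cases hl : (0:Fin 2) = l
  · rw [if_pos hl, if_pos hl, one_mul]
    field_simp
  · rw [if_neg hl, if_neg hl, zero_mul, zero_div]

lemma yent1 (hdet : ∀ a : Fin N, ddet N S d θ k a ≠ 0) (x : Fin N) (l : Fin 2) :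
    Complex.exp (-(↑k * ↑d) * Complex.I + ↑θ * Complex.I) * ee N x * yent N S d θ k x 0 l
      - (S 2 1 * yent N S d θ k x 0 l + S 2 2 * yent N S d θ k x 1 l)
    = (if (1:Fin 2) = l then ((N:ℂ))⁻¹ else 0) := by
  have hN : (N:ℂ) ≠ 0 := Nat.cast_ne_zero.mpr (NeZero.ne N)
  have hdd := hdet x
  unfold yent
  rw [← mul_div_assoc, ← mul_div_assoc, ← mul_div_assoc, ← add_div, ← sub_div, main1]
  by_cases hl : (1:Fin 2) = l
  · rw [if_pos hl, if_pos hl, one_mul]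
    field_simp
  · rw [if_neg hl, if_neg hl, zero_mul, zero_div]

lemma AY (hdet : ∀ a : Fin N, ddet N S d θ k a ≠ 0) :
    ((Matrix.of fun p q : Fin N × Fin 2 =>
      if p.2 = 0 ∧ q = (p.1 + 1, 1) then Complex.exp (-(k*d) * Complex.I - θ * Complex.I)
      else if p.2 = 1 ∧ q = (p.1 - 1, 0) then Complex.exp (-(k*d) * Complex.I + θ * Complex.I)
      else 0)
    - Matrix.of fun p q : Fin N × Fin 2 =>
      if p.1 = q.1 then S p.2.succ q.2.succ else 0)
    * Ymat N S d θ k = 1 := by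
  have hN : (N:ℂ) ≠ 0 := Nat.cast_ne_zero.mpr (NeZero.ne N)
  ext ⟨a, i⟩ ⟨c, l⟩
  rw [Matrix.mul_apply, Fintype.sum_prod_type]
  simp only [Matrix.sub_apply, Matrix.of_apply, sub_mul]
  fin_cases i
  · simp only [Fin.isValue, Fin.zero_eta, Prod.mk.injEq, true_and, and_true, Fin.sum_univ_two,
      show ((0:Fin 2) = 1) = False by simp, show ((1:Fin 2) = 0) = False by simp,
      and_false, false_and, if_false, Finset.sum_sub_distrib, Finset.sum_add_distrib,
      ite_mul, zero_mul, Finset.sum_ite_eq, Finset.sum_ite_eq', Finset.mem_univ, if_true,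
      Fin.succ_zero_eq_one, Fin.succ_one_eq_two, Matrix.one_apply,
      Finset.sum_const_zero, zero_add, add_zero]
    simp only [Ymat, Matrix.of_apply]
    rw [Finset.mul_sum, Finset.mul_sum, Finset.mul_sum, ← Finset.sum_add_distrib,
      ← Finset.sum_sub_distrib]
    have key : ∀ x : Fin N,
        Complex.exp (-(↑k * ↑d) * Complex.I - ↑θ * Complex.I) *
            (ee N (x * (c - (a+1))) * yent N S d θ k x 1 l)
          - (S 1 1 * (ee N (x * (c - a)) * yent N S d θ k x 0 l)
             + S 1 2 * (ee N (x * (c - a)) * yent N S d θ k x 1 l))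
        = ee N (x * (c - a)) * (if (0:Fin 2) = l then ((N:ℂ))⁻¹ else 0) := by
      intro x
      have h1 : x * (c - (a+1)) = x * (c - a) + (-x) := by ring
      rw [h1, ee_add, ee_neg]
      have h2 := yent0 N S d θ k hdet x l
      linear_combination ee N (x * (c - a)) * h2
    rw [Finset.sum_congr rfl (fun x _ => key x), ← Finset.sum_mul, sum_ee]
    by_cases hl : (0:Fin 2) = l
    · by_cases hac : a = c
      · have h3 : c - a = 0 := by rw [hac]; ring
        simp [← hl, hac, h3, mul_inv_cancel₀ hN]
      · have h3 : ¬ (c - a = 0) := by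
          rw [sub_eq_zero]
          exact fun h => hac h.symm
        simp [← hl, hac, h3]
    · simp [hl]
  · simp only [Fin.isValue, Fin.mk_one, Prod.mk.injEq, true_and, and_true, Fin.sum_univ_two,
      show ((0:Fin 2) = 1) = False by simp, show ((1:Fin 2) = 0) = False by simp,
      and_false, false_and, if_false, Finset.sum_sub_distrib, Finset.sum_add_distrib,
      ite_mul, zero_mul, Finset.sum_ite_eq, Finset.sum_ite_eq', Finset.mem_univ, if_true,
      Fin.succ_zero_eq_one, Fin.succ_one_eq_two, Matrix.one_apply,
      Finset.sum_const_zero, zero_add, add_zero]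
    simp only [Ymat, Matrix.of_apply]
    rw [Finset.mul_sum, Finset.mul_sum, Finset.mul_sum, ← Finset.sum_add_distrib,
      ← Finset.sum_sub_distrib]
    have key : ∀ x : Fin N,
        Complex.exp (-(↑k * ↑d) * Complex.I + ↑θ * Complex.I) *
            (ee N (x * (c - (a-1))) * yent N S d θ k x 0 l)
          - (S 2 1 * (ee N (x * (c - a)) * yent N S d θ k x 0 l)
             + S 2 2 * (ee N (x * (c - a)) * yent N S d θ k x 1 l))
        = ee N (x * (c - a)) * (if (1:Fin 2) = l then ((N:ℂ))⁻¹ else 0) := by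
      intro x
      have h1 : x * (c - (a-1)) = x * (c - a) + x := by ring
      rw [h1, ee_add]
      have h2 := yent1 N S d θ k hdet x l
      linear_combination ee N (x * (c - a)) * h2
    rw [Finset.sum_congr rfl (fun x _ => key x), ← Finset.sum_mul, sum_ee]
    by_cases hl : (1:Fin 2) = l
    · by_cases hac : a = c
      · have h3 : c - a = 0 := by rw [hac]; ring
        simp [← hl, hac, h3, mul_inv_cancel₀ hN]
      · have h3 : ¬ (c - a = 0) := by
          rw [sub_eq_zero]
          exact fun h => hac h.symm
        simp [← hl, hac, h3]
    · simp [hl]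


variable (N : ℕ) [NeZero N] (S : Matrix (Fin 3) (Fin 3) ℂ) (d θ k : ℝ)

noncomputable def Vmat : Matrix (Fin N) (Fin N) ℂ :=
  Matrix.of fun a b : Fin N => (ee N (a * b))⁻¹ / ((Real.sqrt N : ℝ) : ℂ)

lemma sqrt_mul_self : ((Real.sqrt N : ℝ) : ℂ) * ((Real.sqrt N : ℝ) : ℂ) = (N:ℂ) := by
  rw [← Complex.ofReal_mul, Real.mul_self_sqrt (Nat.cast_nonneg N)]
  push_cast
  rfl

lemma WV :
    (Matrix.of fun a b : Fin N =>
      Complex.exp (2 * Real.pi * Complex.I / N) ^ ((a : ℕ) * (b : ℕ)) / (Real.sqrt N : ℝ))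
    * Vmat N = 1 := by
  have hN : (N:ℂ) ≠ 0 := Nat.cast_ne_zero.mpr (NeZero.ne N)
  ext a b
  rw [Matrix.mul_apply]
  have hterm : ∀ c : Fin N,
      (Matrix.of fun a b : Fin N =>
        Complex.exp (2 * Real.pi * Complex.I / N) ^ ((a : ℕ) * (b : ℕ)) / (Real.sqrt N : ℝ)) a c
      * Vmat N c b = ee N (c * (a - b)) / (N:ℂ) := by
    intro c
    show (ww N ^ ((a:ℕ) * (c:ℕ)) / ((Real.sqrt N : ℝ):ℂ)) * ((ee N (c * b))⁻¹ / ((Real.sqrt N:ℝ):ℂ))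
        = ee N (c * (a - b)) / (N:ℂ)
    rw [div_mul_div_comm, sqrt_mul_self, ← ee_mul_val, ← ee_sub]
    congr 2
    ring
  rw [Finset.sum_congr rfl (fun c _ => hterm c), ← Finset.sum_div, sum_ee]
  by_cases hab : a = b
  · have h0 : a - b = 0 := by rw [hab]; ring
    simp [h0, hab, Matrix.one_apply, div_self hN]
  · have h0 : ¬ (a - b = 0) := by rw [sub_eq_zero]; exact hab
    simp [h0, hab, Matrix.one_apply]

lemma lamF (a : Fin N)
    (hden : (Complex.exp (2*(k:ℂ)*d*Complex.I) * (S 1 1 * S 2 2 - S 1 2 * S 2 1)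
        + Complex.exp ((k:ℂ)*d*Complex.I) *
            (S 1 2 * zz N θ a + S 2 1 * (zz N θ a)⁻¹)
        - 1) ≠ 0) :
    S 0 0 + (N:ℂ) * (∑ i : Fin 2, ∑ j : Fin 2, S 0 i.succ * yent N S d θ k a i j * S j.succ 0)
    = (Complex.exp (2*(k:ℂ)*d*Complex.I) * S.det
        + Complex.exp ((k:ℂ)*d*Complex.I) *
            ((S 0 0 * S 1 2 - S 0 2 * S 1 0) * zz N θ a
             + (S 0 0 * S 2 1 - S 2 0 * S 0 1) * (zz N θ a)⁻¹)
        - S 0 0) /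
      (Complex.exp (2*(k:ℂ)*d*Complex.I) * (S 1 1 * S 2 2 - S 1 2 * S 2 1)
        + Complex.exp ((k:ℂ)*d*Complex.I) *
            (S 1 2 * zz N θ a + S 2 1 * (zz N θ a)⁻¹)
        - 1) := by
  have hN : (N:ℂ) ≠ 0 := Nat.cast_ne_zero.mpr (NeZero.ne N)
  have ht : Complex.exp ((k:ℂ)*d*Complex.I) ≠ 0 := Complex.exp_ne_zero _
  have hz := zz_ne N θ a
  have hdd : ddet N S d θ k a ≠ 0 := ddet_ne N S d θ k a hden
  have hsum2 : (N:ℂ) * (∑ i : Fin 2, ∑ j : Fin 2, S 0 i.succ * yent N S d θ k a i j * S j.succ 0)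
      = (S 0 1 * (-S 2 2) * S 1 0
         + S 0 1 * (S 1 2 - epsl d k * (zz N θ a)⁻¹) * S 2 0
         + S 0 2 * (S 2 1 - epsl d k * zz N θ a) * S 1 0
         + S 0 2 * (-S 1 1) * S 2 0) / ddet N S d θ k a := by
    simp only [Fin.sum_univ_two, yent, adjA, Fin.isValue,
      show ((1:Fin 2) = 0) = False by simp, show ((0:Fin 2) = 0) = True by simp,
      show ((0:Fin 2) = 1) = False by simp, show ((1:Fin 2) = 1) = True by simp,
      if_true, if_false, Fin.succ_zero_eq_one, Fin.succ_one_eq_two]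
    have e1 : ∀ p A q : ℂ, p * (A / ((N:ℂ) * ddet N S d θ k a)) * q
        = (p * A * q) / ((N:ℂ) * ddet N S d θ k a) := by
      intro p A q
      ring
    rw [e1, e1, e1, e1, ← add_div, ← add_div, ← add_div,
      mul_div_assoc', mul_div_mul_left _ _ hN]
    exact congrArg (fun V => V / ddet N S d θ k a) (by ring)
  rw [hsum2, eq_div_iff hden, ← ddet_eq]
  have hstep : ∀ A e2 dd : ℂ, dd ≠ 0 →
      (S 0 0 + A / dd) * (e2 * dd) = (S 0 0 * dd + A) * e2 := by
    intro A e2 dd h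
    field_simp [h]
  rw [hstep _ _ _ hdd]
  simp only [ddet, epsl_eq, exp2_eq, Matrix.det_fin_three]
  field_simp [ht, hz]
  ring

end Stmt3Aux
open Stmt3Aux

/-- for the ring of `N` vertices with identical local `3×3` scattering
matrix `S`, equal edge lengths `d` and flux per edge `θ`, the total scattering matrix
`𝕊(k,θ) = S_oo + S_oi [E(k,θ) - S_ii]⁻¹ S_io` is diagonalized by the DFT matrix `W`,
with eigenvalues `λ_a(k,θ) = λ(k, θ + 2π(a-1)/N)`, where `λ` is the fundamental
eigenvalue given by the explicit ratio. Internal modes are indexed by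
`Fin N × Fin 2`, the component `(a,0)` (resp. `(a,1)`) being the mode on the edge from
`a` towards `a+1` (resp. towards `a-1`). -/
theorem stmt3 (N : ℕ) [NeZero N] (S : Matrix (Fin 3) (Fin 3) ℂ) (d θ k : ℝ)
    (E Sii : Matrix (Fin N × Fin 2) (Fin N × Fin 2) ℂ)
    (Sio : Matrix (Fin N × Fin 2) (Fin N) ℂ) (Soi : Matrix (Fin N) (Fin N × Fin 2) ℂ)
    (Soo 𝕊 W : Matrix (Fin N) (Fin N) ℂ) (lam : ℝ → ℝ → ℂ)
    -- propagation matrix: E = e^{-ikd} Σ_a (e^{-iθ} E_{(a,0),(a+1,1)} + e^{iθ} E_{(a+1,1),(a,0)})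
    (hE : E = Matrix.of fun p q : Fin N × Fin 2 =>
      if p.2 = 0 ∧ q = (p.1 + 1, 1) then Complex.exp (-(k*d) * Complex.I - θ * Complex.I)
      else if p.2 = 1 ∧ q = (p.1 - 1, 0) then Complex.exp (-(k*d) * Complex.I + θ * Complex.I)
      else 0)
    -- local scattering blocks
    (hSii : Sii = Matrix.of fun p q : Fin N × Fin 2 =>
      if p.1 = q.1 then S p.2.succ q.2.succ else 0)
    (hSio : Sio = Matrix.of fun (p : Fin N × Fin 2) (b : Fin N) =>
      if p.1 = b then S p.2.succ 0 else 0)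
    (hSoi : Soi = Matrix.of fun (a : Fin N) (q : Fin N × Fin 2) =>
      if a = q.1 then S 0 q.2.succ else 0)
    (hSoo : Soo = S 0 0 • (1 : Matrix (Fin N) (Fin N) ℂ))
    -- the total scattering matrix
    (hinv : IsUnit (E - Sii))
    (h𝕊 : 𝕊 = Soo + Soi * (E - Sii)⁻¹ * Sio)
    -- the DFT matrix
    (hW : W = Matrix.of fun a b : Fin N =>
      Complex.exp (2 * Real.pi * Complex.I / N) ^ ((a : ℕ) * (b : ℕ)) / Real.sqrt N)
    -- the fundamental eigenvalue
    (hlam : ∀ k' θ' : ℝ,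
      (Complex.exp (2*(k':ℂ)*d*Complex.I) * (S 1 1 * S 2 2 - S 1 2 * S 2 1)
        + Complex.exp ((k':ℂ)*d*Complex.I) *
            (S 1 2 * Complex.exp ((θ':ℂ)*Complex.I) + S 2 1 * Complex.exp (-(θ':ℂ)*Complex.I))
        - 1) ≠ 0 ∧
      lam k' θ' =
      (Complex.exp (2*(k':ℂ)*d*Complex.I) * S.det
        + Complex.exp ((k':ℂ)*d*Complex.I) *
            ((S 0 0 * S 1 2 - S 0 2 * S 1 0) * Complex.exp ((θ':ℂ)*Complex.I)
             + (S 0 0 * S 2 1 - S 2 0 * S 0 1) * Complex.exp (-(θ':ℂ)*Complex.I))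
        - S 0 0) /
      (Complex.exp (2*(k':ℂ)*d*Complex.I) * (S 1 1 * S 2 2 - S 1 2 * S 2 1)
        + Complex.exp ((k':ℂ)*d*Complex.I) *
            (S 1 2 * Complex.exp ((θ':ℂ)*Complex.I) + S 2 1 * Complex.exp (-(θ':ℂ)*Complex.I))
        - 1)) :
    𝕊 = W⁻¹ * Matrix.diagonal (fun a : Fin N => lam k (θ + 2*(a : ℕ)*Real.pi/N)) * W := by

  have hN : (N:ℂ) ≠ 0 := Nat.cast_ne_zero.mpr (NeZero.ne N)
  subst hE hSii hSio hSoi hSoo hW h𝕊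
  have hden : ∀ a : Fin N, (Complex.exp (2*(k:ℂ)*d*Complex.I) * (S 1 1 * S 2 2 - S 1 2 * S 2 1)
      + Complex.exp ((k:ℂ)*d*Complex.I) * (S 1 2 * zz N θ a + S 2 1 * (zz N θ a)⁻¹) - 1) ≠ 0 := by
    intro a
    have h := (hlam k (θ + 2*(a:ℕ)*Real.pi/N)).1
    rw [show (-(((θ + 2*(a:ℕ)*Real.pi/N : ℝ)):ℂ)) * Complex.I
        = -((((θ + 2*(a:ℕ)*Real.pi/N : ℝ)):ℂ) * Complex.I) by ring,
      Complex.exp_neg, zz_eq] at h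
    exact h
  have hdet : ∀ a : Fin N, ddet N S d θ k a ≠ 0 := fun a => ddet_ne N S d θ k a (hden a)
  have hlam2 : ∀ b : Fin N, lam k (θ + 2*(b:ℕ)*Real.pi/N)
      = S 0 0 + (N:ℂ) * (∑ i : Fin 2, ∑ j : Fin 2,
          S 0 i.succ * yent N S d θ k b i j * S j.succ 0) := by
    intro b
    rw [(hlam k (θ + 2*(b:ℕ)*Real.pi/N)).2,
      show (-(((θ + 2*(b:ℕ)*Real.pi/N : ℝ)):ℂ)) * Complex.I
        = -((((θ + 2*(b:ℕ)*Real.pi/N : ℝ)):ℂ) * Complex.I) by ring,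
      Complex.exp_neg, zz_eq]
    exact (lamF N S d θ k b (hden b)).symm
  rw [Matrix.inv_eq_right_inv (AY N S d θ k hdet)]
  rw [Matrix.inv_eq_right_inv (WV N)]
  rw [Matrix.mul_assoc (Vmat N), Matrix.mul_assoc (Matrix.of _) (Ymat N S d θ k)]
  ext a c
  -- RHS entry
  have hRHS : (Vmat N * (Matrix.diagonal (fun a : Fin N => lam k (θ + 2*(a : ℕ)*Real.pi/N)) *
        Matrix.of fun a b : Fin N =>
          Complex.exp (2 * Real.pi * Complex.I / N) ^ ((a : ℕ) * (b : ℕ)) / Real.sqrt N)) a c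
      = ∑ b : Fin N, ee N (b * (c - a)) * (lam k (θ + 2*(b:ℕ)*Real.pi/N) * (N:ℂ)⁻¹) := by
    rw [Matrix.mul_apply]
    apply Finset.sum_congr rfl
    intro b _
    rw [Matrix.diagonal_mul, Matrix.of_apply]
    show (ee N (a * b))⁻¹ / ((Real.sqrt N : ℝ) : ℂ) *
        (lam k (θ + 2*(b:ℕ)*Real.pi/N) * (ww N ^ ((b:ℕ) * (c:ℕ)) / ((Real.sqrt N : ℝ):ℂ))) = _
    rw [← ee_mul_val, show b * (c - a) = b * c - a * b by ring, ee_sub]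
    have hs : ((N:ℂ))⁻¹ = (((Real.sqrt N : ℝ):ℂ) * ((Real.sqrt N : ℝ):ℂ))⁻¹ := by
      rw [sqrt_mul_self]
    rw [hs, mul_inv]
    ring
  rw [hRHS]
  -- LHS entry
  rw [Matrix.add_apply, Matrix.smul_apply, Matrix.one_apply, smul_eq_mul, mul_ite, mul_one,
    mul_zero, Matrix.mul_apply, Fintype.sum_prod_type]
  simp only [Matrix.of_apply, ite_mul, zero_mul, Finset.sum_ite_irrel, Finset.sum_const_zero,
    Finset.sum_ite_eq, Finset.mem_univ, if_true]
  simp only [Matrix.mul_apply, Fintype.sum_prod_type, Matrix.of_apply, mul_ite, mul_zero,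
    Finset.sum_ite_irrel, Finset.sum_const_zero, Finset.sum_ite_eq', Finset.mem_univ, if_true]
  simp only [Ymat, Matrix.of_apply]
  -- replace delta by sum
  have h1 : (if a = c then S 0 0 else 0) = ∑ b : Fin N, ee N (b * (c - a)) * (S 0 0 * (N:ℂ)⁻¹) := by
    rw [← Finset.sum_mul, sum_ee]
    by_cases hac : a = c
    · have h0 : c - a = 0 := by rw [hac]; ring
      rw [if_pos h0, if_pos hac]
      field_simp
    · have h0 : ¬ (c - a = 0) := by rw [sub_eq_zero]; exact fun h => hac h.symm
      rw [if_neg h0, if_neg hac, zero_mul]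
  rw [h1]
  have h2 : ∀ b : Fin N, ee N (b * (c - a)) * (lam k (θ + 2*(b:ℕ)*Real.pi/N) * (N:ℂ)⁻¹)
      = ee N (b * (c - a)) * ((S 0 0 + (N:ℂ) * (∑ i : Fin 2, ∑ j : Fin 2,
          S 0 i.succ * yent N S d θ k b i j * S j.succ 0)) * (N:ℂ)⁻¹) := by
    intro b
    rw [hlam2 b]
  rw [Finset.sum_congr rfl (fun b _ => h2 b)]
  simp only [Fin.sum_univ_two, Fin.succ_zero_eq_one, Fin.succ_one_eq_two]
  simp only [Finset.mul_sum, Finset.sum_mul, ← Finset.sum_add_distrib]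
  apply Finset.sum_congr rfl
  intro b _
  field_simp
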